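/- Let B_1,…,B_d ∈ 𝔸 be invertible elements such that each B_k² is a nonzero real multiple of 1 and such that for all k, l either B_k B_l = B_l B_k or B_k B_l = −B_l B_k. Then for every A ∈ 𝔸 and every multi-index j ∈ {0,1}^d, the iterated decomposition A_{c^j(→B)} is independent of the order of the list: for every permutation σ of {1,…,d}, ((A_{c^{j_1}(B_1)})_{c^{j_2}(B_2)}⋯)_{c^{j_d}(B_d)} = ((A_{c^{j_{σ(1)}}(B_{σ(1)})})_{c^{j_{σ(2)}}(B_{σ(2)})}⋯)_{c^{j_{σ(d)}}(B_{σ(d)})}. -/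

import Mathlib

noncomputable section

variable {𝔸 : Type*}

/-- The commutative (`s = 0`) and anticommutative (`s = 1`) part of `A` with respect to an
invertible element `B`: `A_{c^s(B)} = ½(A + (−1)^s B⁻¹AB)`. -/
def cPart [Ring 𝔸] [Algebra ℝ 𝔸] (B : 𝔸) (s : Fin 2) (A : 𝔸) : 𝔸 :=
  (2 : ℝ)⁻¹ • (A + (-1 : 𝔸) ^ (s : ℕ) * (Ring.inverse B * A * B))

/-- The forward iterated decomposition `A_{c^j(→B)}`, applying the first list entry first. -/
def cFwd [Ring 𝔸] [Algebra ℝ 𝔸] (L : List (𝔸 × Fin 2)) (A : 𝔸) : 𝔸 :=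
  L.foldl (fun acc p => cPart p.1 p.2 acc) A

/-- Conjugations by coorthogonal invertible elements commute. -/
lemma conj_comm [Ring 𝔸] {C D : 𝔸} (hC : IsUnit C) (hD : IsUnit D)
    (h : C * D = D * C ∨ C * D = -(D * C)) (A : 𝔸) :
    Ring.inverse C * (Ring.inverse D * A * D) * C
      = Ring.inverse D * (Ring.inverse C * A * C) * D := by
  set c := Ring.inverse C with hc
  set d := Ring.inverse D with hd
  have hcC : c * C = 1 := Ring.inverse_mul_cancel C hC
  have hCc : C * c = 1 := Ring.mul_inverse_cancel C hC
  have hdD : d * D = 1 := Ring.inverse_mul_cancel D hD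
  have hDd : D * d = 1 := Ring.mul_inverse_cancel D hD
  rcases h with h | h
  · have h1 : D * c = c * D := by
      calc D * c = c * (C * D) * c := by rw [← mul_assoc, hcC, one_mul]
        _ = c * (D * C) * c := by rw [h]
        _ = c * D := by rw [mul_assoc c (D*C) c, mul_assoc D C c, hCc, mul_one]
    have h2 : c * d = d * c := by
      calc c * d = d * (D * c) * d := by rw [← mul_assoc, hdD, one_mul]
        _ = d * (c * D) * d := by rw [h1]
        _ = d * c := by rw [mul_assoc d (c*D) d, mul_assoc c D d, hDd, mul_one]
    calc c * (d * A * D) * C = c * d * A * (D * C) := by noncomm_ring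
      _ = d * c * A * (C * D) := by rw [h2, h]
      _ = d * (c * A * C) * D := by noncomm_ring
  · have h1 : D * c = -(c * D) := by
      calc D * c = c * (C * D) * c := by rw [← mul_assoc, hcC, one_mul]
        _ = c * (-(D * C)) * c := by rw [h]
        _ = -(c * (D * C) * c) := by noncomm_ring
        _ = -(c * D) := by rw [mul_assoc c (D*C) c, mul_assoc D C c, hCc, mul_one]
    have h2 : c * d = -(d * c) := by
      calc c * d = d * (D * c) * d := by rw [← mul_assoc, hdD, one_mul]
        _ = d * (-(c * D)) * d := by rw [h1]
        _ = -(d * (c * D) * d) := by noncomm_ring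
        _ = -(d * c) := by rw [mul_assoc d (c*D) d, mul_assoc c D d, hDd, mul_one]
    calc c * (d * A * D) * C = (c * d) * A * (D * C) := by noncomm_ring
      _ = (-(d * c)) * A * (D * C) := by rw [h2]
      _ = (d * c) * A * (-(D * C)) := by noncomm_ring
      _ = (d * c) * A * (C * D) := by rw [← h]
      _ = d * (c * A * C) * D := by noncomm_ring

/-- The `cPart` operations with respect to coorthogonal invertible elements commute. -/
lemma cPart_comm' [Ring 𝔸] [Algebra ℝ 𝔸] {C D : 𝔸} (hC : IsUnit C) (hD : IsUnit D)
    (h : C * D = D * C ∨ C * D = -(D * C)) (s t : Fin 2) (A : 𝔸) :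
    cPart C s (cPart D t A) = cPart D t (cPart C s A) := by
  have key := conj_comm hC hD h A
  simp only [mul_assoc] at key
  fin_cases s <;> fin_cases t <;>
    simp only [cPart, Fin.isValue, Fin.val_zero, Fin.val_one, pow_zero, pow_one, one_mul,
      neg_mul, mul_neg, neg_neg, smul_add, smul_neg, smul_smul, mul_add, add_mul,
      mul_smul_comm, smul_mul_assoc, mul_assoc, key] <;> abel

/-- For invertible elements `B₁,…,B_d` with real square and mutually coorthogonal
(`B_k B_l = ±B_l B_k`), the iterated decomposition `A_{c^j(→B)}` is independent of the
order of the list. -/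
theorem cFwd_perm_invariant [Ring 𝔸] [Algebra ℝ 𝔸]
    {d : ℕ} (B : Fin d → 𝔸) (hU : ∀ k, IsUnit (B k))
    (hsq : ∀ k, ∃ r : ℝ, r ≠ 0 ∧ B k ^ 2 = r • (1 : 𝔸))
    (hco : ∀ k l, B k * B l = B l * B k ∨ B k * B l = -(B l * B k))
    (A : 𝔸) (j : Fin d → Fin 2) (σ : Equiv.Perm (Fin d)) :
    cFwd (List.ofFn (fun l => (B l, j l))) A =
      cFwd (List.ofFn (fun l => (B (σ l), j (σ l)))) A := by
  have hperm : List.Perm (List.ofFn (fun l => (B l, j l)))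
      (List.ofFn (fun l => (B (σ l), j (σ l)))) :=
    (σ.ofFn_comp_perm (fun l => (B l, j l))).symm
  refine hperm.foldl_eq' ?_ A
  rintro x hx y hy z
  obtain ⟨k, rfl⟩ := List.mem_ofFn.1 hx
  obtain ⟨l, rfl⟩ := List.mem_ofFn.1 hy
  exact cPart_comm' (hU l) (hU k) (hco l k) (j l) (j k) z
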